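/- Let a > 0 be a real number and n ≥ 1, and let p_n be the degree-n OPA to 1/(1−z)^a in H². Suppose p_n has exactly n pairwise distinct complex roots w_1, …, w_n, and that w_k ≠ 0 and w_k ≠ 1 for every k. Then for every k = 1, …, n: ∑_{j ≠ k} 1/(w_k − w_j) + (a + 1/2)/(w_k − 1) − ((n + a)/2)/w_k = 0. That is, the zeros of p_n are in equilibrium in the field of a positive charge of magnitude a + 1/2 at z = 1 and a negative charge of magnitude (n + a)/2 at the origin. -/

import Mathlib

open Polynomial Complex

/-- The H² error functional `∫₀^{2π} |1 − p(e^{iθ})(1 − e^{iθ})^a|² dθ`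
(principal complex power). -/
noncomputable def energyPow (a : ℝ) (p : Polynomial ℂ) : ℝ :=
  ∫ θ in (0:ℝ)..(2 * Real.pi),
    ‖(1 - p.eval (Complex.exp (θ * Complex.I)) *
      (1 - Complex.exp (θ * Complex.I)) ^ (a : ℂ))‖ ^ 2

/-- `p` is the degree-`n` optimal polynomial approximant to `1/(1-z)^a` in H². -/
def IsOPAPow (a : ℝ) (n : ℕ) (p : Polynomial ℂ) : Prop :=
  p.degree ≤ (n : ℕ) ∧
    ∀ q : Polynomial ℂ, q.degree ≤ (n : ℕ) → energyPow a p ≤ energyPow a q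

noncomputable section
open MeasureTheory Set intervalIntegral

namespace OPAaux

def ze (θ : ℝ) : ℂ := Complex.exp (θ * Complex.I)
def zi (θ : ℝ) : ℂ := Complex.exp (-(θ * Complex.I))

lemma ze_ne_zero (θ : ℝ) : ze θ ≠ 0 := Complex.exp_ne_zero _
lemma zi_ne_zero (θ : ℝ) : zi θ ≠ 0 := Complex.exp_ne_zero _
lemma zi_eq_inv (θ : ℝ) : zi θ = (ze θ)⁻¹ := by rw [ze, zi, Complex.exp_neg]
lemma ze_mul_zi (θ : ℝ) : ze θ * zi θ = 1 := by
  rw [zi_eq_inv, mul_inv_cancel₀ (ze_ne_zero θ)]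
lemma conj_ze (θ : ℝ) : (starRingEnd ℂ) (ze θ) = zi θ := by
  rw [ze, zi, ← Complex.exp_conj]
  congr 1
  simp [Complex.conj_ofReal]
lemma ze_re (θ : ℝ) : (ze θ).re = Real.cos θ := by
  simp [ze, Complex.exp_ofReal_mul_I_re]
lemma ze_im (θ : ℝ) : (ze θ).im = Real.sin θ := by
  simp [ze, Complex.exp_ofReal_mul_I_im]
lemma ze_eq_one_iff (θ : ℝ) : ze θ = 1 ↔ ∃ m : ℤ, θ = m * (2 * Real.pi) := by
  rw [ze, Complex.exp_eq_one_iff]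
  constructor
  · rintro ⟨m, hm⟩
    refine ⟨m, ?_⟩
    have : (θ : ℂ) * I = (m : ℂ) * (2 * Real.pi) * I := by rw [hm]; ring
    have h2 := mul_right_cancel₀ Complex.I_ne_zero this
    exact_mod_cast h2
  · rintro ⟨m, hm⟩
    exact ⟨m, by rw [hm]; push_cast; ring⟩
lemma ze_ne_one (θ : ℝ) (hθ : θ ∈ Set.Ioo 0 (2 * Real.pi)) : ze θ ≠ 1 := by
  rw [Ne, ze_eq_one_iff]
  rintro ⟨m, hm⟩
  obtain ⟨h1, h2⟩ := hθ
  have hpi := Real.pi_pos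
  rcases lt_trichotomy m 0 with h | h | h
  · have hm1 : (m:ℝ) ≤ -1 := by exact_mod_cast Int.le_of_lt_add_one (by simpa using h)
    nlinarith
  · simp [h] at hm; linarith
  · have : (1:ℝ) ≤ (m:ℝ) := by exact_mod_cast h
    nlinarith

lemma base_re (θ : ℝ) : (1 - ze θ).re = 1 - Real.cos θ := by
  simp [Complex.sub_re, ze_re]
lemma base_re_nonneg (θ : ℝ) : 0 ≤ (1 - ze θ).re := by
  rw [base_re]; linarith [Real.cos_le_one θ]
lemma base_ne_zero {θ : ℝ} (h : ze θ ≠ 1) : 1 - ze θ ≠ 0 := by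
  intro h0; apply h; linear_combination -h0
lemma base_slit {θ : ℝ} (h : ze θ ≠ 1) : (1 - ze θ) ∈ Complex.slitPlane := by
  rw [Complex.mem_slitPlane_iff]
  rcases lt_or_eq_of_le (base_re_nonneg θ) with hlt | heq
  · exact Or.inl hlt
  · exfalso
    have hc : Real.cos θ = 1 := by have := base_re θ; nlinarith [heq]
    have hs : Real.sin θ = 0 := by
      nlinarith [Real.sin_sq_add_cos_sq θ]
    apply h
    apply Complex.ext <;> simp [ze_re, ze_im, hc, hs]
lemma base_arg_ne_pi (θ : ℝ) : (1 - ze θ).arg ≠ Real.pi := by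
  intro h
  rw [Complex.arg_eq_pi_iff] at h
  have := base_re_nonneg θ
  linarith [h.1]

lemma zi_eq_ze_neg (θ : ℝ) : zi θ = ze (-θ) := by
  rw [ze, zi]; norm_num
lemma conj_zi (θ : ℝ) : (starRingEnd ℂ) (zi θ) = ze θ := by
  rw [zi_eq_ze_neg, conj_ze, zi_eq_ze_neg]; simp
lemma zi_eq_one_iff (θ : ℝ) : zi θ = 1 ↔ ze θ = 1 := by
  constructor
  · intro h
    have := congrArg (starRingEnd ℂ) h
    rwa [conj_zi, map_one] at this
  · intro h
    have := congrArg (starRingEnd ℂ) h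
    rwa [conj_ze, map_one] at this
lemma zi_ne_one (θ : ℝ) (hθ : θ ∈ Set.Ioo 0 (2 * Real.pi)) : zi θ ≠ 1 :=
  fun h => ze_ne_one θ hθ ((zi_eq_one_iff θ).mp h)
lemma basei_re_nonneg (θ : ℝ) : 0 ≤ (1 - zi θ).re := by
  rw [zi_eq_ze_neg]; exact base_re_nonneg (-θ)
lemma basei_ne_zero {θ : ℝ} (h : ze θ ≠ 1) : 1 - zi θ ≠ 0 := by
  rw [zi_eq_ze_neg]
  exact base_ne_zero (θ := -θ) (by rw [← zi_eq_ze_neg, Ne, zi_eq_one_iff]; exact h)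
lemma basei_slit {θ : ℝ} (h : ze θ ≠ 1) : (1 - zi θ) ∈ Complex.slitPlane := by
  rw [zi_eq_ze_neg]
  exact base_slit (θ := -θ) (by rw [← zi_eq_ze_neg, Ne, zi_eq_one_iff]; exact h)
lemma basei_arg_ne_pi (θ : ℝ) : (1 - zi θ).arg ≠ Real.pi := by
  rw [zi_eq_ze_neg]; exact base_arg_ne_pi (-θ)

def ff (a : ℝ) (θ : ℝ) : ℂ := (1 - ze θ) ^ (a : ℂ)
def gg (a : ℝ) (θ : ℝ) : ℂ := (1 - zi θ) ^ (a : ℂ)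
def Wf (a : ℝ) (θ : ℝ) : ℂ := ff a θ * gg a θ

lemma conj_ff (a : ℝ) (θ : ℝ) : (starRingEnd ℂ) (ff a θ) = gg a θ := by
  rw [ff, gg]
  have h := Complex.conj_cpow (1 - ze θ) (a : ℂ) (base_arg_ne_pi θ)
  rw [Complex.conj_ofReal] at h
  rw [← h]
  congr 1
  rw [map_sub, map_one, conj_ze]

lemma conj_gg (a : ℝ) (θ : ℝ) : (starRingEnd ℂ) (gg a θ) = ff a θ := by
  have := congrArg (starRingEnd ℂ) (conj_ff a θ)
  rw [Complex.conj_conj] at this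
  exact this.symm

lemma Wf_eq_sq_abs (a : ℝ) (θ : ℝ) : Wf a θ = ((‖ff a θ‖)^2 : ℝ) := by
  rw [Wf, ← conj_ff, Complex.mul_conj, ← Complex.sq_norm]


lemma cont_ze : Continuous ze := by
  unfold ze; fun_prop
lemma cont_zi : Continuous zi := by
  unfold zi; fun_prop

lemma cont_ff {a : ℝ} (ha : 0 < a) : Continuous (ff a) := by
  rw [continuous_iff_continuousAt]
  intro θ
  have h1 : ContinuousAt (fun z : ℂ => z ^ (a : ℂ)) (1 - ze θ) :=
    continuousAt_cpow_const_of_re_pos (Or.inl (base_re_nonneg θ)) (by simpa using ha)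
  exact ContinuousAt.comp (g := fun z : ℂ => z ^ (a : ℂ)) (f := fun θ => 1 - ze θ)
    (x := θ) h1 ((continuous_const.sub cont_ze).continuousAt)
lemma cont_gg {a : ℝ} (ha : 0 < a) : Continuous (gg a) := by
  rw [continuous_iff_continuousAt]
  intro θ
  have h1 : ContinuousAt (fun z : ℂ => z ^ (a : ℂ)) (1 - zi θ) :=
    continuousAt_cpow_const_of_re_pos (Or.inl (basei_re_nonneg θ)) (by simpa using ha)
  exact ContinuousAt.comp (g := fun z : ℂ => z ^ (a : ℂ)) (f := fun θ => 1 - zi θ)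
    (x := θ) h1 ((continuous_const.sub cont_zi).continuousAt)
lemma cont_Wf {a : ℝ} (ha : 0 < a) : Continuous (Wf a) := (cont_ff ha).mul (cont_gg ha)

lemma ff_ne_zero {a : ℝ} {θ : ℝ} (h : ze θ ≠ 1) : ff a θ ≠ 0 := by
  rw [ff, Ne, Complex.cpow_eq_zero_iff]
  rintro ⟨h0, -⟩
  exact base_ne_zero h h0

lemma hasDerivAt_ze (θ : ℝ) : HasDerivAt ze (Complex.I * ze θ) θ := by
  have h1 : HasDerivAt (fun θ : ℝ => (θ : ℂ)) 1 θ := by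
    simpa using (hasDerivAt_id θ).ofReal_comp
  have h2 : HasDerivAt (fun θ : ℝ => (θ : ℂ) * Complex.I) (1 * Complex.I) θ := h1.mul_const _
  have h3 := h2.cexp
  rw [show Complex.exp ((θ:ℂ) * Complex.I) * (1 * Complex.I) = Complex.I * ze θ by
    rw [ze]; ring] at h3
  exact h3
lemma hasDerivAt_zi (θ : ℝ) : HasDerivAt zi (-(Complex.I * zi θ)) θ := by
  have h1 : HasDerivAt (fun θ : ℝ => (θ : ℂ)) 1 θ := by
    simpa using (hasDerivAt_id θ).ofReal_comp
  have h2 : HasDerivAt (fun θ : ℝ => -((θ : ℂ) * Complex.I)) (-(1 * Complex.I)) θ :=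
    (h1.mul_const _).neg
  have := h2.cexp
  simp only [zi]
  refine this.congr_deriv ?_
  simp [zi]
  ring

lemma hasDerivAt_ff {a : ℝ} {θ : ℝ} (h : ze θ ≠ 1) :
    HasDerivAt (ff a) ((a : ℂ) * (1 - ze θ) ^ ((a : ℂ) - 1) * (-(Complex.I * ze θ))) θ := by
  have hinner : HasDerivAt (fun θ : ℝ => 1 - ze θ) (-(Complex.I * ze θ)) θ :=
    (hasDerivAt_ze θ).const_sub 1
  exact (Complex.hasStrictDerivAt_cpow_const (base_slit h)).hasDerivAt.comp θ hinner
lemma hasDerivAt_gg {a : ℝ} {θ : ℝ} (h : ze θ ≠ 1) :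
    HasDerivAt (gg a) ((a : ℂ) * (1 - zi θ) ^ ((a : ℂ) - 1) * (Complex.I * zi θ)) θ := by
  have hinner : HasDerivAt (fun θ : ℝ => 1 - zi θ) (Complex.I * zi θ) θ := by
    simpa using ((hasDerivAt_zi θ).const_sub 1)
  exact (Complex.hasStrictDerivAt_cpow_const (basei_slit h)).hasDerivAt.comp θ hinner

lemma hasDerivAt_poly (h : Polynomial ℂ) (θ : ℝ) :
    HasDerivAt (fun θ => h.eval (ze θ)) (h.derivative.eval (ze θ) * (Complex.I * ze θ)) θ :=
  (h.hasDerivAt (ze θ)).comp θ (hasDerivAt_ze θ)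

lemma hasDerivAt_zem (m : ℤ) (θ : ℝ) :
    HasDerivAt (fun θ => ze θ ^ m) ((m : ℂ) * ze θ ^ m * Complex.I) θ := by
  have h := (_root_.hasDerivAt_zpow m (ze θ) (Or.inl (ze_ne_zero θ))).comp θ (hasDerivAt_ze θ)
  refine h.congr_deriv ?_
  have h2 : ze θ ^ (m - 1) * ze θ = ze θ ^ m := by
    rw [← zpow_add_one₀ (ze_ne_zero θ)]; ring_nf
  rw [← h2]
  ring




open Real in
lemma ze_zero : ze 0 = 1 := by simp [ze]
open Real in
lemma ze_two_pi : ze (2 * Real.pi) = 1 := by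
  rw [ze_eq_one_iff]; exact ⟨1, by ring⟩

lemma two_pi_pos : (0:ℝ) < 2 * Real.pi := by positivity

lemma integral_deriv_zero (F F' : ℝ → ℂ)
    (hF : ContinuousOn F (Icc 0 (2 * Real.pi)))
    (hF' : Continuous F')
    (hd : ∀ θ ∈ Ioo (0:ℝ) (2 * Real.pi), HasDerivAt F (F' θ) θ)
    (h0 : F 0 = 0) (h1 : F (2 * Real.pi) = 0) :
    ∫ θ in (0:ℝ)..(2 * Real.pi), F' θ = 0 := by
  rw [intervalIntegral.integral_eq_sub_of_hasDeriv_right_of_le two_pi_pos.le hF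
    (fun x hx => (hd x hx).hasDerivWithinAt) (hF'.intervalIntegrable 0 (2 * Real.pi)),
    h0, h1, sub_zero]

variable {a : ℝ}

lemma cont_zem (m : ℤ) : Continuous (fun θ => ze θ ^ m) := by
  apply cont_ze.zpow₀ m
  intro x; exact Or.inl (ze_ne_zero x)

lemma gg_zero (ha : 0 < a) : gg a 0 = 0 := by
  rw [gg, zi_eq_ze_neg]
  have : ze (-0) = 1 := by rw [neg_zero, ze_zero]
  rw [show (0:ℝ) = -0 by ring] at this ⊢
  rw [this]
  simp [Complex.zero_cpow (by exact_mod_cast ha.ne' : (a:ℂ) ≠ 0)]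

lemma gg_two_pi (ha : 0 < a) : gg a (2 * Real.pi) = 0 := by
  have hz : zi (2 * Real.pi) = 1 := (zi_eq_one_iff _).mpr ze_two_pi
  rw [gg, hz]
  simp [Complex.zero_cpow (by exact_mod_cast ha.ne' : (a:ℂ) ≠ 0)]

lemma ff_zero' (ha : 0 < a) : ff a 0 = 0 := by
  rw [ff, ze_zero]
  simp [Complex.zero_cpow (by exact_mod_cast ha.ne' : (a:ℂ) ≠ 0)]

lemma ff_two_pi (ha : 0 < a) : ff a (2 * Real.pi) = 0 := by
  rw [ff, ze_two_pi]
  simp [Complex.zero_cpow (by exact_mod_cast ha.ne' : (a:ℂ) ≠ 0)]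

/-- The key first moment family for `gg`. -/
lemma L1 (ha : 0 < a) (m : ℤ) :
    (∫ θ in (0:ℝ)..(2 * Real.pi),
      ze θ ^ m * (((m:ℂ) + 1) * ze θ + ((a:ℂ) - (m:ℂ))) * gg a θ) = 0 := by
  have key : (∫ θ in (0:ℝ)..(2 * Real.pi),
      Complex.I * (ze θ ^ m * (((m:ℂ) + 1) * ze θ + ((a:ℂ) - (m:ℂ))) * gg a θ)) = 0 := by
    apply integral_deriv_zero (F := fun θ => ze θ ^ m * (ze θ - 1) * gg a θ)
    · exact (((cont_zem m).mul (cont_ze.sub continuous_const)).mul (cont_gg ha)).continuousOn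
    · exact continuous_const.mul (((cont_zem m).mul
        ((continuous_const.mul cont_ze).add continuous_const)).mul (cont_gg ha))
    · intro θ hθ
      have h1 : ze θ ≠ 1 := ze_ne_one θ hθ
      have hD := ((hasDerivAt_zem m θ).mul ((hasDerivAt_ze θ).sub_const 1)).mul
        (hasDerivAt_gg (a := a) h1)
      have hgg : (1 - zi θ) ^ ((a:ℂ) - 1) * (1 - zi θ) = gg a θ := by
        rw [gg, show (a:ℂ) = ((a:ℂ) - 1) + 1 by ring,
          Complex.cpow_add _ _ (basei_ne_zero h1), Complex.cpow_one]
        ring_nf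
      have hzezi : ze θ * zi θ = 1 := ze_mul_zi θ
      have hEq : ((m:ℂ) * ze θ ^ m * Complex.I * (ze θ - 1) + ze θ ^ m * (Complex.I * ze θ)) *
            gg a θ + ze θ ^ m * (ze θ - 1) *
              ((a:ℂ) * (1 - zi θ) ^ ((a:ℂ) - 1) * (Complex.I * zi θ)) =
          Complex.I * (ze θ ^ m * (((m:ℂ) + 1) * ze θ + ((a:ℂ) - (m:ℂ))) * gg a θ) := by
        have hz1 : (ze θ - 1) * zi θ = 1 - zi θ := by
          have := ze_mul_zi θ; linear_combination this
        calc ((m:ℂ) * ze θ ^ m * Complex.I * (ze θ - 1) + ze θ ^ m * (Complex.I * ze θ)) *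
            gg a θ + ze θ ^ m * (ze θ - 1) *
              ((a:ℂ) * (1 - zi θ) ^ ((a:ℂ) - 1) * (Complex.I * zi θ))
            = ((m:ℂ) * ze θ ^ m * Complex.I * (ze θ - 1) + ze θ ^ m * (Complex.I * ze θ)) *
              gg a θ + ze θ ^ m * (a:ℂ) * Complex.I *
                ((1 - zi θ) ^ ((a:ℂ) - 1) * ((ze θ - 1) * zi θ)) := by ring
          _ = _ := by rw [hz1, hgg]; ring
      exact hEq ▸ hD
    · rw [ze_zero, gg_zero ha]; ring
    · rw [ze_two_pi, gg_two_pi ha]; ring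
  rw [intervalIntegral.integral_const_mul] at key
  exact (mul_eq_zero.mp key).resolve_left Complex.I_ne_zero


variable {a : ℝ}

lemma cont_polyze (h : Polynomial ℂ) : Continuous (fun θ => h.eval (ze θ)) :=
  h.continuous.comp cont_ze

/-- The key moment family for the weight `Wf`. -/
lemma L2 (ha : 0 < a) (h : Polynomial ℂ) (m : ℤ) :
    (∫ θ in (0:ℝ)..(2 * Real.pi),
      ze θ ^ m * (ze θ * (ze θ - 1) * h.derivative.eval (ze θ) +
        (((a:ℂ) + 1 + (m:ℂ)) * ze θ + ((a:ℂ) - (m:ℂ))) * h.eval (ze θ)) * Wf a θ) = 0 := by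
  have key : (∫ θ in (0:ℝ)..(2 * Real.pi),
      Complex.I * (ze θ ^ m * (ze θ * (ze θ - 1) * h.derivative.eval (ze θ) +
        (((a:ℂ) + 1 + (m:ℂ)) * ze θ + ((a:ℂ) - (m:ℂ))) * h.eval (ze θ)) * Wf a θ)) = 0 := by
    apply integral_deriv_zero
      (F := fun θ => ze θ ^ m * (ze θ - 1) * h.eval (ze θ) * Wf a θ)
    · exact ((((cont_zem m).mul (cont_ze.sub continuous_const)).mul (cont_polyze h)).mul
        (cont_Wf ha)).continuousOn
    · apply continuous_const.mul
      apply Continuous.mul _ (cont_Wf ha)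
      apply Continuous.mul (cont_zem m)
      apply Continuous.add
      · exact (cont_ze.mul (cont_ze.sub continuous_const)).mul (cont_polyze h.derivative)
      · exact ((continuous_const.mul cont_ze).add continuous_const).mul (cont_polyze h)
    · intro θ hθ
      have h1 : ze θ ≠ 1 := ze_ne_one θ hθ
      have hW : HasDerivAt (Wf a)
          ((a : ℂ) * (1 - ze θ) ^ ((a : ℂ) - 1) * (-(Complex.I * ze θ)) * gg a θ +
            ff a θ * ((a : ℂ) * (1 - zi θ) ^ ((a : ℂ) - 1) * (Complex.I * zi θ))) θ :=
        (hasDerivAt_ff h1).mul (hasDerivAt_gg h1)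
      have hD := (((hasDerivAt_zem m θ).mul ((hasDerivAt_ze θ).sub_const 1)).mul
        (hasDerivAt_poly h θ)).mul hW
      have hff : (1 - ze θ) ^ ((a:ℂ) - 1) * (1 - ze θ) = ff a θ := by
        rw [ff, show (a:ℂ) = ((a:ℂ) - 1) + 1 by ring,
          Complex.cpow_add _ _ (base_ne_zero h1), Complex.cpow_one]
        ring_nf
      have hgg : (1 - zi θ) ^ ((a:ℂ) - 1) * (1 - zi θ) = gg a θ := by
        rw [gg, show (a:ℂ) = ((a:ℂ) - 1) + 1 by ring,
          Complex.cpow_add _ _ (basei_ne_zero h1), Complex.cpow_one]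
        ring_nf
      have hz1 : (ze θ - 1) * zi θ = 1 - zi θ := by
        linear_combination (ze_mul_zi θ)
      have hB : (1 - zi θ) ^ ((a:ℂ) - 1) * ((ze θ - 1) * zi θ) = gg a θ := by
        rw [hz1]; exact hgg
      have hEq : (((m:ℂ) * ze θ ^ m * Complex.I * (ze θ - 1) + ze θ ^ m * (Complex.I * ze θ)) *
            h.eval (ze θ) + ze θ ^ m * (ze θ - 1) *
              (h.derivative.eval (ze θ) * (Complex.I * ze θ))) * Wf a θ +
            ze θ ^ m * (ze θ - 1) * h.eval (ze θ) *
              ((a : ℂ) * (1 - ze θ) ^ ((a : ℂ) - 1) * (-(Complex.I * ze θ)) * gg a θ +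
                ff a θ * ((a : ℂ) * (1 - zi θ) ^ ((a : ℂ) - 1) * (Complex.I * zi θ))) =
          Complex.I * (ze θ ^ m * (ze θ * (ze θ - 1) * h.derivative.eval (ze θ) +
            (((a:ℂ) + 1 + (m:ℂ)) * ze θ + ((a:ℂ) - (m:ℂ))) * h.eval (ze θ)) * Wf a θ) := by
        rw [Wf]
        linear_combination ((a:ℂ) * Complex.I * ze θ ^ m * h.eval (ze θ) * ze θ * gg a θ) * hff +
          ((a:ℂ) * Complex.I * ze θ ^ m * h.eval (ze θ) * ff a θ) * hB
      exact hEq ▸ hD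
    · rw [ze_zero]; simp [Wf, ff_zero' ha]
    · rw [ze_two_pi]; simp [Wf, ff_two_pi ha]
  rw [intervalIntegral.integral_const_mul] at key
  exact (mul_eq_zero.mp key).resolve_left Complex.I_ne_zero


variable {a : ℝ}

/-- weighted moments of a polynomial against `Wf`. -/
def PI (a : ℝ) (h : Polynomial ℂ) (m : ℤ) : ℂ :=
  ∫ θ in (0:ℝ)..(2 * Real.pi), ze θ ^ m * h.eval (ze θ) * Wf a θ

/-- moments of `gg`. -/
def bb (a : ℝ) (m : ℤ) : ℂ :=
  ∫ θ in (0:ℝ)..(2 * Real.pi), ze θ ^ m * gg a θ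

lemma cont_PI (ha : 0 < a) (h : Polynomial ℂ) (m : ℤ) :
    Continuous (fun θ => ze θ ^ m * h.eval (ze θ) * Wf a θ) :=
  ((cont_zem m).mul (cont_polyze h)).mul (cont_Wf ha)

lemma int_PI (ha : 0 < a) (h : Polynomial ℂ) (m : ℤ) :
    IntervalIntegrable (fun θ => ze θ ^ m * h.eval (ze θ) * Wf a θ)
      MeasureTheory.volume 0 (2 * Real.pi) :=
  (cont_PI ha h m).intervalIntegrable _ _

lemma int_bb (ha : 0 < a) (m : ℤ) :
    IntervalIntegrable (fun θ => ze θ ^ m * gg a θ)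
      MeasureTheory.volume 0 (2 * Real.pi) :=
  ((cont_zem m).mul (cont_gg ha)).intervalIntegrable _ _

lemma bb_rec (ha : 0 < a) (m : ℤ) :
    ((m:ℂ) + 1) * bb a (m+1) + ((a:ℂ) - (m:ℂ)) * bb a m = 0 := by
  have h := L1 ha m
  have heq : Set.EqOn (fun θ => ze θ ^ m * (((m:ℂ) + 1) * ze θ + ((a:ℂ) - (m:ℂ))) * gg a θ)
      (fun θ => ((m:ℂ)+1) * (ze θ ^ (m+1) * gg a θ) + ((a:ℂ)-(m:ℂ)) * (ze θ ^ m * gg a θ))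
      (Set.uIcc 0 (2 * Real.pi)) := by
    intro θ _
    simp only
    rw [zpow_add_one₀ (ze_ne_zero θ)]
    ring
  rw [intervalIntegral.integral_congr heq, intervalIntegral.integral_add
      (f := fun θ => ((m:ℂ)+1) * (ze θ ^ (m+1) * gg a θ))
      (g := fun θ => ((a:ℂ)-(m:ℂ)) * (ze θ ^ m * gg a θ))
      ((continuous_const.mul ((cont_zem _).mul (cont_gg ha))).intervalIntegrable _ _)
      ((continuous_const.mul ((cont_zem _).mul (cont_gg ha))).intervalIntegrable _ _),
    intervalIntegral.integral_const_mul, intervalIntegral.integral_const_mul] at h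
  exact h

lemma aC_ne (x : ℝ) (hx : 0 < x) : (x:ℂ) ≠ 0 := by
  intro hce
  have := congrArg Complex.re hce
  simp at this
  linarith

lemma bb_neg (ha : 0 < a) : ∀ j : ℕ, bb a (-1 - (j:ℤ)) = 0 := by
  have key : ∀ j : ℕ, bb a (-1 - (j:ℤ)) = 0 := by
    intro j
    induction j with
    | zero =>
      have h := bb_rec ha (-1)
      norm_num at h
      rcases h with h | h
      · exfalso
        have := congrArg Complex.re h
        simp at this
        linarith
      · simpa using h
    | succ j ih =>
      have h := bb_rec ha (-2 - (j:ℤ))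
      have h1 : (-2 - (j:ℤ)) + 1 = -1 - (j:ℤ) := by ring
      rw [h1, ih, mul_zero, zero_add] at h
      have h2 : ((a:ℂ) - ((-2 - (j:ℤ) : ℤ) : ℂ)) ≠ 0 := by
        intro hce
        have := congrArg Complex.re hce
        push_cast at this
        simp at this
        linarith
      have h4 := (mul_eq_zero.mp h).resolve_left h2
      have h3 : (-2 - (j:ℤ)) = -1 - ((j+1 : ℕ) : ℤ) := by push_cast; ring
      rw [← h3]
      exact h4
  exact key

lemma PI_rec (ha : 0 < a) (h : Polynomial ℂ) (m : ℤ) :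
    PI a h.derivative (m+2) - PI a h.derivative (m+1) + ((a:ℂ) + 1 + (m:ℂ)) * PI a h (m+1)
      + ((a:ℂ) - (m:ℂ)) * PI a h m = 0 := by
  have hL := L2 ha h m
  have heq : Set.EqOn
      (fun θ => ze θ ^ m * (ze θ * (ze θ - 1) * h.derivative.eval (ze θ) +
        (((a:ℂ) + 1 + (m:ℂ)) * ze θ + ((a:ℂ) - (m:ℂ))) * h.eval (ze θ)) * Wf a θ)
      (fun θ => (ze θ ^ (m+2) * h.derivative.eval (ze θ) * Wf a θ +
          (-1) * (ze θ ^ (m+1) * h.derivative.eval (ze θ) * Wf a θ)) +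
        (((a:ℂ) + 1 + (m:ℂ)) * (ze θ ^ (m+1) * h.eval (ze θ) * Wf a θ) +
          ((a:ℂ) - (m:ℂ)) * (ze θ ^ m * h.eval (ze θ) * Wf a θ)))
      (Set.uIcc 0 (2 * Real.pi)) := by
    intro θ _
    simp only
    rw [show m + 2 = (m + 1) + 1 by ring, zpow_add_one₀ (ze_ne_zero θ),
      zpow_add_one₀ (ze_ne_zero θ)]
    ring
  rw [intervalIntegral.integral_congr heq] at hL
  rw [intervalIntegral.integral_add
      (f := fun θ => ze θ ^ (m+2) * h.derivative.eval (ze θ) * Wf a θ + (-1) * (ze θ ^ (m+1) * h.derivative.eval (ze θ) * Wf a θ))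
      (g := fun θ => ((a:ℂ) + 1 + (m:ℂ)) * (ze θ ^ (m+1) * h.eval (ze θ) * Wf a θ) + ((a:ℂ) - (m:ℂ)) * (ze θ ^ m * h.eval (ze θ) * Wf a θ))
      ((int_PI ha h.derivative (m+2)).add
        ((continuous_const.mul (cont_PI ha h.derivative (m+1))).intervalIntegrable _ _))
      (((continuous_const.mul (cont_PI ha h (m+1))).intervalIntegrable _ _).add
        ((continuous_const.mul (cont_PI ha h m)).intervalIntegrable _ _)),
    intervalIntegral.integral_add (g := fun θ => (-1) * (ze θ ^ (m+1) * h.derivative.eval (ze θ) * Wf a θ)) (int_PI ha h.derivative (m+2))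
      ((continuous_const.mul (cont_PI ha h.derivative (m+1))).intervalIntegrable _ _),
    intervalIntegral.integral_add
      (f := fun θ => ((a:ℂ) + 1 + (m:ℂ)) * (ze θ ^ (m+1) * h.eval (ze θ) * Wf a θ)) (g := fun θ => ((a:ℂ) - (m:ℂ)) * (ze θ ^ m * h.eval (ze θ) * Wf a θ))
      ((continuous_const.mul (cont_PI ha h (m+1))).intervalIntegrable _ _)
      ((continuous_const.mul (cont_PI ha h m)).intervalIntegrable _ _),
    intervalIntegral.integral_const_mul, intervalIntegral.integral_const_mul,
    intervalIntegral.integral_const_mul] at hL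
  rw [PI, PI, PI, PI]
  linear_combination hL

variable {a : ℝ}

def uu (a : ℝ) (p : Polynomial ℂ) (θ : ℝ) : ℂ := 1 - p.eval (ze θ) * ff a θ

lemma cont_uu (ha : 0 < a) (p : Polynomial ℂ) : Continuous (uu a p) :=
  continuous_const.sub ((cont_polyze p).mul (cont_ff ha))

lemma energy_eq (q : Polynomial ℂ) :
    energyPow a q = ∫ θ in (0:ℝ)..(2 * Real.pi), ‖uu a q θ‖ ^ 2 := rfl

lemma conj_zf (a : ℝ) (j : ℕ) (θ : ℝ) :
    (starRingEnd ℂ) (ze θ ^ (j:ℕ) * ff a θ) = ze θ ^ (-(j:ℤ)) * gg a θ := by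
  rw [map_mul, map_pow, conj_ze, conj_ff, zi_eq_inv, zpow_neg, zpow_natCast, inv_pow]

lemma orth (ha : 0 < a) {n : ℕ} {p : Polynomial ℂ} (hp : IsOPAPow a n p)
    (j : ℕ) (hj : j ≤ n) : PI a p (-(j:ℤ)) = bb a (-(j:ℤ)) := by
  classical
  set zf : ℝ → ℂ := fun θ => ze θ ^ (j:ℕ) * ff a θ with hzf
  have cont_zf : Continuous zf := (cont_ze.pow j).mul (cont_ff ha)
  set A : ℂ := ∫ θ in (0:ℝ)..(2 * Real.pi), uu a p θ * (starRingEnd ℂ) (zf θ) with hA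
  set Cc : ℝ := ∫ θ in (0:ℝ)..(2 * Real.pi), ‖zf θ‖ ^ 2 with hC
  have hCnonneg : 0 ≤ Cc := by
    rw [hC]
    apply intervalIntegral.integral_nonneg two_pi_pos.le
    intro θ _; positivity
  -- energy expansion
  have hexp : ∀ t : ℂ, energyPow a (p + Polynomial.C t * Polynomial.X ^ j) =
      energyPow a p - 2 * ((starRingEnd ℂ) t * A).re + ‖t‖ ^ 2 * Cc := by
    intro t
    have hptw : ∀ θ : ℝ, ‖uu a (p + Polynomial.C t * Polynomial.X ^ j) θ‖ ^ 2 =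
        ‖uu a p θ‖ ^ 2
          - 2 * ((starRingEnd ℂ) t * (uu a p θ * (starRingEnd ℂ) (zf θ))).re
          + ‖t‖ ^ 2 * ‖zf θ‖ ^ 2 := by
      intro θ
      have h1 : uu a (p + Polynomial.C t * Polynomial.X ^ j) θ = uu a p θ - t * zf θ := by
        simp only [uu, hzf, Polynomial.eval_add, Polynomial.eval_mul, Polynomial.eval_C,
          Polynomial.eval_pow, Polynomial.eval_X]
        ring
      have h2 : (uu a p θ * (starRingEnd ℂ) (t * zf θ)).re
          = ((starRingEnd ℂ) t * (uu a p θ * (starRingEnd ℂ) (zf θ))).re := by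
        rw [map_mul]; ring_nf
      rw [h1, Complex.sq_norm, Complex.normSq_sub, h2, ← Complex.sq_norm (uu a p θ),
        ← Complex.sq_norm (t * zf θ), norm_mul, mul_pow]
      ring
    rw [energy_eq, energy_eq]
    rw [intervalIntegral.integral_congr (g := fun θ =>
        ‖uu a p θ‖ ^ 2
          - 2 * ((starRingEnd ℂ) t * (uu a p θ * (starRingEnd ℂ) (zf θ))).re
          + ‖t‖ ^ 2 * ‖zf θ‖ ^ 2) (fun θ _ => hptw θ)]
    have i1 : IntervalIntegrable (fun θ => ‖uu a p θ‖ ^ 2)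
        MeasureTheory.volume 0 (2 * Real.pi) :=
      (((continuous_norm.comp (cont_uu ha p)).pow 2)).intervalIntegrable _ _
    have cre : Continuous (fun θ => ((starRingEnd ℂ) t * (uu a p θ * (starRingEnd ℂ) (zf θ))).re) := by
      apply Complex.continuous_re.comp
      exact continuous_const.mul ((cont_uu ha p).mul (Complex.continuous_conj.comp cont_zf))
    have i2 : IntervalIntegrable
        (fun θ => 2 * ((starRingEnd ℂ) t * (uu a p θ * (starRingEnd ℂ) (zf θ))).re)
        MeasureTheory.volume 0 (2 * Real.pi) :=
      (continuous_const.mul cre).intervalIntegrable _ _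
    have i3 : IntervalIntegrable (fun θ => ‖t‖ ^ 2 * ‖zf θ‖ ^ 2)
        MeasureTheory.volume 0 (2 * Real.pi) :=
      (continuous_const.mul ((continuous_norm.comp cont_zf).pow 2)).intervalIntegrable _ _
    rw [intervalIntegral.integral_add (i1.sub i2) i3, intervalIntegral.integral_sub i1 i2,
      intervalIntegral.integral_const_mul, intervalIntegral.integral_const_mul]
    have hint : IntervalIntegrable
        (fun θ => (starRingEnd ℂ) t * (uu a p θ * (starRingEnd ℂ) (zf θ)))
        MeasureTheory.volume 0 (2 * Real.pi) :=
      (continuous_const.mul ((cont_uu ha p).mul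
        (Complex.continuous_conj.comp cont_zf))).intervalIntegrable _ _
    have h3 := Complex.reCLM.intervalIntegral_comp_comm hint
    simp only [Complex.reCLM_apply] at h3
    have hre : (∫ θ in (0:ℝ)..(2 * Real.pi),
        ((starRingEnd ℂ) t * (uu a p θ * (starRingEnd ℂ) (zf θ))).re)
        = ((starRingEnd ℂ) t * A).re := by
      rw [hA, ← intervalIntegral.integral_const_mul, ← h3]
    rw [hre, hC]
  -- minimality gives A = 0
  have hA0 : A = 0 := by
    by_contra hA0
    set s : ℝ := 1 / (Cc + 1) with hs
    have hspos : 0 < s := by rw [hs]; positivity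
    have hdeg : (p + Polynomial.C ((s:ℂ) * A) * Polynomial.X ^ j).degree ≤ (n : WithBot ℕ) := by
      apply le_trans (Polynomial.degree_add_le _ _)
      apply max_le hp.1
      apply le_trans (Polynomial.degree_C_mul_X_pow_le _ _)
      exact_mod_cast hj
    have hmin := hp.2 _ hdeg
    rw [hexp ((s:ℂ) * A)] at hmin
    have habs : ‖(s:ℂ) * A‖ ^ 2 = s^2 * ‖A‖ ^ 2 := by
      rw [norm_mul, mul_pow, Complex.norm_real, Real.norm_eq_abs, abs_of_pos hspos]
    have hres : ((starRingEnd ℂ) ((s:ℂ) * A) * A).re = s * ‖A‖ ^ 2 := by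
      have hstep : (starRingEnd ℂ) ((s:ℂ) * A) * A
          = ((s : ℂ)) * ((Complex.normSq A : ℝ) : ℂ) := by
        rw [map_mul, Complex.conj_ofReal, mul_assoc, mul_comm ((starRingEnd ℂ) A) A,
          Complex.mul_conj]
      rw [hstep, ← Complex.ofReal_mul, Complex.ofReal_re, ← Complex.sq_norm]
    rw [habs, hres] at hmin
    have habsA : 0 < ‖A‖ ^ 2 := by
      have := norm_pos_iff.mpr hA0
      positivity
    have hkey : 0 ≤ - 2 * (s * ‖A‖ ^ 2) + s^2 * ‖A‖ ^ 2 * Cc := by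
      linarith
    have hsC : s * Cc < 2 := by
      rw [hs]
      have h1 : (1 / (Cc + 1)) * Cc < 1 := by
        rw [div_mul_eq_mul_div, div_lt_one (by linarith)]
        linarith
      linarith
    nlinarith [mul_pos hspos habsA]
  -- rewrite A
  have hsplit : A = bb a (-(j:ℤ)) - PI a p (-(j:ℤ)) := by
    rw [hA]
    have hptw : Set.EqOn (fun θ => uu a p θ * (starRingEnd ℂ) (zf θ))
        (fun θ => ze θ ^ (-(j:ℤ)) * gg a θ
          - ze θ ^ (-(j:ℤ)) * p.eval (ze θ) * Wf a θ) (Set.uIcc 0 (2 * Real.pi)) := by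
      intro θ _
      simp only [hzf]
      rw [conj_zf, uu, Wf]
      ring
    rw [intervalIntegral.integral_congr hptw,
      intervalIntegral.integral_sub (int_bb ha _) (int_PI ha p _)]
    rfl
  rw [hsplit] at hA0
  linear_combination -hA0

variable {a : ℝ}

lemma ze_injOn : Set.InjOn ze (Set.Ioo 0 (2 * Real.pi)) := by
  intro x hx y hy hxy
  have h : Complex.exp ((x:ℂ) * Complex.I - (y:ℂ) * Complex.I) = 1 := by
    rw [Complex.exp_sub]
    rw [ze] at hxy
    rw [ze] at hxy
    rw [hxy, div_self (Complex.exp_ne_zero _)]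
  rw [Complex.exp_eq_one_iff] at h
  obtain ⟨m, hm⟩ := h
  have hxyr : ((x - y : ℝ) : ℂ) * Complex.I = ((m * (2 * Real.pi) : ℝ) : ℂ) * Complex.I := by
    push_cast
    linear_combination hm
  have h2 : (x - y : ℝ) = m * (2 * Real.pi) := by
    have := mul_right_cancel₀ Complex.I_ne_zero hxyr
    exact_mod_cast this
  have hpi := Real.pi_pos
  obtain ⟨hx1, hx2⟩ := hx
  obtain ⟨hy1, hy2⟩ := hy
  have hm0 : m = 0 := by
    rcases lt_trichotomy m 0 with h | h | h
    · exfalso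
      have : (m:ℝ) ≤ -1 := by exact_mod_cast Int.le_of_lt_add_one (by simpa using h)
      nlinarith
    · exact h
    · exfalso
      have : (1:ℝ) ≤ (m:ℝ) := by exact_mod_cast h
      nlinarith
  rw [hm0] at h2
  simp at h2
  linarith

lemma T_eq_zero_of_moments (ha : 0 < a) {n : ℕ} {T : Polynomial ℂ}
    (hdeg : T.natDegree ≤ n)
    (hK : ∀ j : ℕ, j ≤ n → PI a T (-(j:ℤ)) = 0) : T = 0 := by
  classical
  by_contra hT
  -- complex integral equals zero
  have hSc : (∫ θ in (0:ℝ)..(2 * Real.pi),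
      T.eval (ze θ) * (starRingEnd ℂ) (T.eval (ze θ)) * Wf a θ) = 0 := by
    have hptw : Set.EqOn (fun θ => T.eval (ze θ) * (starRingEnd ℂ) (T.eval (ze θ)) * Wf a θ)
        (fun θ => ∑ j ∈ Finset.range (n+1), (starRingEnd ℂ) (T.coeff j) *
          (ze θ ^ (-(j:ℤ)) * T.eval (ze θ) * Wf a θ)) (Set.uIcc 0 (2 * Real.pi)) := by
      intro θ _
      simp only
      have hev : T.eval (ze θ) = ∑ j ∈ Finset.range (n+1), T.coeff j * ze θ ^ j :=
        T.eval_eq_sum_range' (lt_of_le_of_lt hdeg (Nat.lt_succ_self n)) (ze θ)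
      have hconj : (starRingEnd ℂ) (T.eval (ze θ))
          = ∑ j ∈ Finset.range (n+1), (starRingEnd ℂ) (T.coeff j) * ze θ ^ (-(j:ℤ)) := by
        rw [hev, map_sum]
        apply Finset.sum_congr rfl
        intro j _
        rw [map_mul, map_pow, conj_ze, zi_eq_inv, zpow_neg, zpow_natCast, inv_pow]
      rw [hconj, Finset.mul_sum, Finset.sum_mul]
      apply Finset.sum_congr rfl
      intro j _
      ring
    rw [intervalIntegral.integral_congr hptw]
    rw [intervalIntegral.integral_finset_sum (μ := MeasureTheory.volume)
      (s := Finset.range (n+1))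
      (f := fun j θ => (starRingEnd ℂ) (T.coeff j) * (ze θ ^ (-(j:ℤ)) * T.eval (ze θ) * Wf a θ))
      (fun j _ =>
        (continuous_const.mul (cont_PI ha T (-(j:ℤ)))).intervalIntegrable _ _)]
    apply Finset.sum_eq_zero
    intro j hj
    rw [intervalIntegral.integral_const_mul]
    have : PI a T (-(j:ℤ)) = 0 := hK j (Nat.lt_succ_iff.mp (Finset.mem_range.mp hj))
    rw [PI] at this
    rw [this, mul_zero]
  -- complex integral equals a real nonneg integral
  have hreal : (∫ θ in (0:ℝ)..(2 * Real.pi),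
      T.eval (ze θ) * (starRingEnd ℂ) (T.eval (ze θ)) * Wf a θ)
      = ((∫ θ in (0:ℝ)..(2 * Real.pi),
          (‖T.eval (ze θ) * ff a θ‖)^2 : ℝ) : ℂ) := by
    rw [← intervalIntegral.integral_ofReal]
    apply intervalIntegral.integral_congr
    intro θ _
    simp only
    rw [Wf, ← conj_ff]
    calc T.eval (ze θ) * (starRingEnd ℂ) (T.eval (ze θ)) *
          (ff a θ * (starRingEnd ℂ) (ff a θ))
        = (T.eval (ze θ) * ff a θ) * (starRingEnd ℂ) (T.eval (ze θ) * ff a θ) := by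
          rw [map_mul]; ring
      _ = _ := by
          rw [Complex.mul_conj, ← Complex.sq_norm]
  -- positivity
  have hpos : 0 < ∫ θ in (0:ℝ)..(2 * Real.pi), (‖T.eval (ze θ) * ff a θ‖)^2 := by
    set g : ℝ → ℝ := fun θ => (‖T.eval (ze θ) * ff a θ‖)^2 with hg
    have hgcont : Continuous g :=
      (continuous_norm.comp ((cont_polyze T).mul (cont_ff ha))).pow 2
    -- find a point where g is positive
    have hfin : {x : ℂ | T.IsRoot x}.Finite := T.finite_setOf_isRoot hT
    have hSfin : (Set.Ioo (0:ℝ) (2 * Real.pi) ∩ ze ⁻¹' {x : ℂ | T.IsRoot x}).Finite := by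
      apply Set.Finite.of_finite_image (f := ze)
      · exact hfin.subset (by intro x hx; obtain ⟨θ, hθ, rfl⟩ := hx; exact hθ.2)
      · exact ze_injOn.mono Set.inter_subset_left
    have hIoo : (Set.Ioo (0:ℝ) (2 * Real.pi)).Infinite := Set.Ioo_infinite two_pi_pos
    obtain ⟨θ₀, hθ₀⟩ := (hIoo.diff hSfin).nonempty
    have hθIoo : θ₀ ∈ Set.Ioo (0:ℝ) (2 * Real.pi) := hθ₀.1
    have hTθ : T.eval (ze θ₀) ≠ 0 := by
      intro h0
      exact hθ₀.2 ⟨hθIoo, h0⟩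
    have hgθ : 0 < g θ₀ := by
      rw [hg]
      have hff0 : ff a θ₀ ≠ 0 := ff_ne_zero (ze_ne_one θ₀ hθIoo)
      have hne : T.eval (ze θ₀) * ff a θ₀ ≠ 0 := mul_ne_zero hTθ hff0
      exact pow_pos (norm_pos_iff.mpr hne) 2
    -- a small interval around θ₀ where g > 0
    have hopen : IsOpen ({θ : ℝ | 0 < g θ} ∩ Set.Ioo 0 (2 * Real.pi)) :=
      (isOpen_lt continuous_const hgcont).inter isOpen_Ioo
    have hmem : θ₀ ∈ ({θ : ℝ | 0 < g θ} ∩ Set.Ioo 0 (2 * Real.pi)) := ⟨hgθ, hθIoo⟩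
    obtain ⟨ε, hε, hball⟩ := Metric.isOpen_iff.mp hopen θ₀ hmem
    set c' := θ₀ - ε/2 with hc'
    set d' := θ₀ + ε/2 with hd'
    have hcd : ∀ x ∈ Set.Icc c' d', x ∈ ({θ : ℝ | 0 < g θ} ∩ Set.Ioo 0 (2 * Real.pi)) := by
      intro x hx
      apply hball
      rw [Metric.mem_ball, Real.dist_eq, abs_sub_lt_iff]
      obtain ⟨h1, h2⟩ := hx
      rw [hc'] at h1; rw [hd'] at h2
      constructor <;> linarith
    have h0c : (0:ℝ) ≤ c' := by
      have := (hcd c' ⟨le_refl _, by rw [hc', hd']; linarith⟩).2.1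
      linarith
    have hd2π : d' ≤ 2 * Real.pi := by
      have := (hcd d' ⟨by rw [hc', hd']; linarith, le_refl _⟩).2.2
      linarith
    have hcd' : c' < d' := by rw [hc', hd']; linarith
    have hgnonneg : ∀ θ : ℝ, 0 ≤ g θ := fun θ => by rw [hg]; positivity
    have hi : ∀ u v : ℝ, IntervalIntegrable g MeasureTheory.volume u v :=
      fun u v => hgcont.intervalIntegrable u v
    have hmid : 0 < ∫ θ in c'..d', g θ :=
      intervalIntegral.intervalIntegral_pos_of_pos_on (hi c' d')
        (fun x hx => (hcd x ⟨hx.1.le, hx.2.le⟩).1) hcd'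
    have hsplit1 : (∫ θ in (0:ℝ)..(2 * Real.pi), g θ)
        = (∫ θ in (0:ℝ)..c', g θ) + (∫ θ in c'..d', g θ) + (∫ θ in d'..(2 * Real.pi), g θ) := by
      rw [intervalIntegral.integral_add_adjacent_intervals (hi 0 c') (hi c' d'),
        intervalIntegral.integral_add_adjacent_intervals (hi 0 d') (hi d' (2 * Real.pi))]
    have hnn1 : 0 ≤ ∫ θ in (0:ℝ)..c', g θ :=
      intervalIntegral.integral_nonneg h0c (fun u _ => hgnonneg u)
    have hnn2 : 0 ≤ ∫ θ in d'..(2 * Real.pi), g θ :=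
      intervalIntegral.integral_nonneg hd2π (fun u _ => hgnonneg u)
    rw [hsplit1]
    linarith
  rw [hreal] at hSc
  have : (∫ θ in (0:ℝ)..(2 * Real.pi), (‖T.eval (ze θ) * ff a θ‖)^2) = 0 := by
    exact_mod_cast hSc
  linarith

variable {a : ℝ}

lemma PI_T (ha : 0 < a) {n : ℕ} (p : Polynomial ℂ) (m : ℤ) :
    PI a (Polynomial.X * (Polynomial.X - 1) * p.derivative.derivative
      + (Polynomial.C ((a:ℂ) + 1 - (n:ℂ)) * Polynomial.X + Polynomial.C ((n:ℂ) + (a:ℂ)))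
        * p.derivative
      - Polynomial.C ((n:ℂ) * (a:ℂ)) * p) m
    = PI a p.derivative.derivative (m+2) - PI a p.derivative.derivative (m+1)
      + ((a:ℂ) + 1 - (n:ℂ)) * PI a p.derivative (m+1) + ((n:ℂ) + (a:ℂ)) * PI a p.derivative m
      - ((n:ℂ) * (a:ℂ)) * PI a p m := by
  have heq : Set.EqOn
      (fun θ => ze θ ^ m * ((Polynomial.X * (Polynomial.X - 1) * p.derivative.derivative
        + (Polynomial.C ((a:ℂ) + 1 - (n:ℂ)) * Polynomial.X + Polynomial.C ((n:ℂ) + (a:ℂ)))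
          * p.derivative
        - Polynomial.C ((n:ℂ) * (a:ℂ)) * p).eval (ze θ)) * Wf a θ)
      (fun θ => (((ze θ ^ (m+2) * p.derivative.derivative.eval (ze θ) * Wf a θ)
          + (-1) * (ze θ ^ (m+1) * p.derivative.derivative.eval (ze θ) * Wf a θ))
          + ((a:ℂ) + 1 - (n:ℂ)) * (ze θ ^ (m+1) * p.derivative.eval (ze θ) * Wf a θ))
        + (((n:ℂ) + (a:ℂ)) * (ze θ ^ m * p.derivative.eval (ze θ) * Wf a θ)
          + (-((n:ℂ) * (a:ℂ))) * (ze θ ^ m * p.eval (ze θ) * Wf a θ)))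
      (Set.uIcc 0 (2 * Real.pi)) := by
    intro θ _
    simp only [Polynomial.eval_add, Polynomial.eval_sub, Polynomial.eval_mul,
      Polynomial.eval_X, Polynomial.eval_C, Polynomial.eval_one]
    rw [show m + 2 = (m + 1) + 1 by ring, zpow_add_one₀ (ze_ne_zero θ),
      zpow_add_one₀ (ze_ne_zero θ)]
    ring
  rw [PI, intervalIntegral.integral_congr heq]
  have I1 := int_PI ha p.derivative.derivative (m+2)
  have I2 : IntervalIntegrable (fun θ => (-1 : ℂ) *
      (ze θ ^ (m+1) * p.derivative.derivative.eval (ze θ) * Wf a θ))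
      MeasureTheory.volume 0 (2 * Real.pi) :=
    (continuous_const.mul (cont_PI ha p.derivative.derivative (m+1))).intervalIntegrable _ _
  have I3 : IntervalIntegrable (fun θ => ((a:ℂ) + 1 - (n:ℂ)) *
      (ze θ ^ (m+1) * p.derivative.eval (ze θ) * Wf a θ))
      MeasureTheory.volume 0 (2 * Real.pi) :=
    (continuous_const.mul (cont_PI ha p.derivative (m+1))).intervalIntegrable _ _
  have I4 : IntervalIntegrable (fun θ => ((n:ℂ) + (a:ℂ)) *
      (ze θ ^ m * p.derivative.eval (ze θ) * Wf a θ))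
      MeasureTheory.volume 0 (2 * Real.pi) :=
    (continuous_const.mul (cont_PI ha p.derivative m)).intervalIntegrable _ _
  have I5 : IntervalIntegrable (fun θ => (-((n:ℂ) * (a:ℂ))) *
      (ze θ ^ m * p.eval (ze θ) * Wf a θ))
      MeasureTheory.volume 0 (2 * Real.pi) :=
    (continuous_const.mul (cont_PI ha p m)).intervalIntegrable _ _
  rw [intervalIntegral.integral_add ((I1.add I2).add I3) (I4.add I5),
    intervalIntegral.integral_add (I1.add I2) I3,
    intervalIntegral.integral_add I1 I2,
    intervalIntegral.integral_add I4 I5,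
    intervalIntegral.integral_const_mul, intervalIntegral.integral_const_mul,
    intervalIntegral.integral_const_mul, intervalIntegral.integral_const_mul]
  rw [PI, PI, PI, PI, PI]
  ring

lemma T_vanishes (ha : 0 < a) {n : ℕ} (hn : 1 ≤ n) {p : Polynomial ℂ}
    (hp : IsOPAPow a n p) :
    Polynomial.X * (Polynomial.X - 1) * p.derivative.derivative
      + (Polynomial.C ((a:ℂ) + 1 - (n:ℂ)) * Polynomial.X + Polynomial.C ((n:ℂ) + (a:ℂ)))
        * p.derivative
      - Polynomial.C ((n:ℂ) * (a:ℂ)) * p = 0 := by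
  classical
  set T : Polynomial ℂ := Polynomial.X * (Polynomial.X - 1) * p.derivative.derivative
      + (Polynomial.C ((a:ℂ) + 1 - (n:ℂ)) * Polynomial.X + Polynomial.C ((n:ℂ) + (a:ℂ)))
        * p.derivative
      - Polynomial.C ((n:ℂ) * (a:ℂ)) * p with hT
  -- orthogonality facts
  have hM : ∀ i : ℕ, 1 ≤ i → i ≤ n → PI a p (-(i:ℤ)) = 0 := by
    intro i h1 h2
    rw [orth ha hp i h2]
    obtain ⟨i', rfl⟩ : ∃ i', i = i' + 1 := ⟨i - 1, by omega⟩
    have hb := bb_neg ha i'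
    have : (-1 - (i':ℤ)) = -((i' + 1 : ℕ) : ℤ) := by push_cast; ring
    rw [this] at hb
    exact hb
  -- moments of T vanish
  have hK : ∀ j : ℕ, j ≤ n → PI a T (-(j:ℤ)) = 0 := by
    intro j hj
    have hTj := PI_T (n := n) ha p (-(j:ℤ))
    rw [← hT] at hTj
    have e1 := PI_rec ha p.derivative (-(j:ℤ))
    have e2 := PI_rec ha p (-(j:ℤ) - 1)
    have i1 : -(j:ℤ) - 1 + 2 = -(j:ℤ) + 1 := by ring
    have i2 : -(j:ℤ) - 1 + 1 = -(j:ℤ) := by ring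
    rw [i1, i2] at e2
    push_cast at e1 e2 hTj
    rcases Nat.eq_zero_or_pos j with h0 | h1
    · subst h0
      have hPm1 : PI a p (-(0:ℤ) - 1) = 0 := by
        have := hM 1 le_rfl hn
        have hidx : -((1:ℕ):ℤ) = -(0:ℤ) - 1 := by norm_num
        rwa [hidx] at this
      push_cast at hTj e1 e2 hPm1 ⊢
      linear_combination hTj + e1 + (0 - (n:ℂ)) * e2 + ((n:ℂ) * ((a:ℂ) + 1)) * hPm1
    · have hP0 : PI a p (-(j:ℤ)) = 0 := hM j h1 hj
      rcases Nat.lt_or_ge j n with hlt | hge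
      · have hPm1 : PI a p (-(j:ℤ) - 1) = 0 := by
          have := hM (j+1) (by omega) (by omega)
          have hidx : -((j+1:ℕ):ℤ) = -(j:ℤ) - 1 := by push_cast; ring
          rwa [hidx] at this
        linear_combination hTj + e1 + ((j:ℂ) - (n:ℂ)) * e2
          + (-(((j:ℂ) - (n:ℂ)) * ((a:ℂ) - (j:ℂ))) - (n:ℂ) * (a:ℂ)) * hP0
          + (-(((j:ℂ) - (n:ℂ)) * ((a:ℂ) + (j:ℂ) + 1))) * hPm1
      · have hjn : j = n := by omega
        subst hjn
        linear_combination hTj + e1 + (-((j:ℂ) * (a:ℂ))) * hP0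
  -- degree bound
  have hdp : p.natDegree ≤ n := Polynomial.natDegree_le_iff_degree_le.mpr hp.1
  have hdeg : T.natDegree ≤ n := by
    have hT1 : (Polynomial.X * (Polynomial.X - 1) * p.derivative.derivative
        : Polynomial ℂ).natDegree ≤ n := by
      by_cases h2 : p.derivative.derivative = 0
      · rw [h2, mul_zero]; simp
      · have h1 : p.derivative ≠ 0 := by
          intro h; rw [h] at h2; simp at h2
        have hd1 : 1 ≤ p.derivative.natDegree := by
          by_contra hcon
          push_neg at hcon
          have h0 : p.derivative.natDegree = 0 := by omega
          have := Polynomial.eq_C_of_natDegree_eq_zero h0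
          rw [this] at h2
          simp at h2
        have hd2 : 2 ≤ p.natDegree := by
          have := Polynomial.natDegree_derivative_le p
          omega
        have hb : (p.derivative.derivative).natDegree ≤ p.natDegree - 2 := by
          have h3 := Polynomial.natDegree_derivative_le p
          have h4 := Polynomial.natDegree_derivative_le p.derivative
          omega
        have hX2 : (Polynomial.X * (Polynomial.X - 1) : Polynomial ℂ).natDegree ≤ 2 := by
          apply le_trans (Polynomial.natDegree_mul_le)
          have hx1 : (Polynomial.X : Polynomial ℂ).natDegree ≤ 1 := Polynomial.natDegree_X_le
          have hx2 : ((Polynomial.X : Polynomial ℂ) - 1).natDegree ≤ 1 := by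
            apply le_trans (Polynomial.natDegree_sub_le _ _)
            simp [Polynomial.natDegree_X_le]
          omega
        apply le_trans (Polynomial.natDegree_mul_le)
        omega
    have hT2 : ((Polynomial.C ((a:ℂ) + 1 - (n:ℂ)) * Polynomial.X
        + Polynomial.C ((n:ℂ) + (a:ℂ))) * p.derivative).natDegree ≤ n := by
      have hlin : ((Polynomial.C ((a:ℂ) + 1 - (n:ℂ)) * Polynomial.X
          + Polynomial.C ((n:ℂ) + (a:ℂ)))).natDegree ≤ 1 := by
        apply le_trans (Polynomial.natDegree_add_le _ _)
        have h1 : (Polynomial.C ((a:ℂ) + 1 - (n:ℂ)) * Polynomial.X).natDegree ≤ 1 := by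
          apply le_trans (Polynomial.natDegree_mul_le)
          rw [Polynomial.natDegree_C, Polynomial.natDegree_X]
        simp only [Polynomial.natDegree_C]
        omega
      have hdd : p.derivative.natDegree ≤ p.natDegree - 1 := Polynomial.natDegree_derivative_le p
      apply le_trans (Polynomial.natDegree_mul_le)
      omega
    have hT3 : (Polynomial.C ((n:ℂ) * (a:ℂ)) * p).natDegree ≤ n := by
      apply le_trans (Polynomial.natDegree_mul_le)
      simp only [Polynomial.natDegree_C]
      omega
    rw [hT]
    apply le_trans (Polynomial.natDegree_sub_le _ _)
    apply max_le _ hT3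
    apply le_trans (Polynomial.natDegree_add_le _ _)
    exact max_le hT1 hT2
  exact T_eq_zero_of_moments ha hdeg hK
lemma deriv_prod_eval {ι : Type*} [DecidableEq ι] (s : Finset ι) (v : ι → ℂ) (x : ℂ) :
    (Polynomial.derivative (∏ j ∈ s, (Polynomial.X - Polynomial.C (v j)))).eval x
      = ∑ j ∈ s, ∏ l ∈ s.erase j, (x - v l) := by
  classical
  induction s using Finset.induction_on with
  | empty => simp
  | @insert i s hi ih =>
    rw [Finset.prod_insert hi, Polynomial.derivative_mul]
    simp only [Polynomial.eval_add, Polynomial.eval_mul, Polynomial.eval_sub,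
      Polynomial.eval_X, Polynomial.eval_C, Polynomial.derivative_sub,
      Polynomial.derivative_X, Polynomial.derivative_C, sub_zero, Polynomial.eval_one, one_mul]
    rw [ih, Finset.sum_insert hi, Finset.erase_insert hi, Finset.mul_sum]
    congr 1
    · simp [Polynomial.eval_prod]
    · apply Finset.sum_congr rfl
      intro j hj
      have hij : i ≠ j := fun h => hi (h ▸ hj)
      rw [Finset.erase_insert_of_ne hij, Finset.prod_insert
        (fun hmem => hi (Finset.mem_of_mem_erase hmem))]

end OPAaux

end

open OPAaux in
theorem opa_zeros_equilibrium_one_singularity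
    (a : ℝ) (ha : 0 < a) (n : ℕ) (hn : 1 ≤ n)
    (p : Polynomial ℂ) (hp : IsOPAPow a n p)
    (c : ℂ) (hc : c ≠ 0)
    (w : Fin n → ℂ) (hwinj : Function.Injective w)
    (hroots : p = Polynomial.C c * ∏ j, (Polynomial.X - Polynomial.C (w j)))
    (hw0 : ∀ k, w k ≠ 0) (hw1 : ∀ k, w k ≠ 1) :
    ∀ k, (∑ j ∈ Finset.univ.erase k, 1 / (w k - w j)) +
      ((a : ℂ) + 1 / 2) / (w k - 1) -
      (((n : ℂ) + (a : ℂ)) / 2) / w k = 0 := by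
  classical
  intro k
  have hT0 := T_vanishes (a := a) ha hn hp
  have hev := congrArg (Polynomial.eval (w k)) hT0
  simp only [Polynomial.eval_add, Polynomial.eval_sub, Polynomial.eval_mul,
    Polynomial.eval_X, Polynomial.eval_C, Polynomial.eval_one, Polynomial.eval_zero] at hev
  set E := Finset.univ.erase k with hE
  set r : Polynomial ℂ := Polynomial.C c * ∏ j ∈ E, (Polynomial.X - Polynomial.C (w j)) with hr
  have hfact : p = (Polynomial.X - Polynomial.C (w k)) * r := by
    rw [hroots, hr, ← Finset.mul_prod_erase Finset.univ _ (Finset.mem_univ k), ← hE]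
    ring
  have hp0 : p.eval (w k) = 0 := by rw [hfact]; simp
  have hd1 : p.derivative = r + (Polynomial.X - Polynomial.C (w k)) * r.derivative := by
    rw [hfact, Polynomial.derivative_mul]
    simp
  have hd2 : p.derivative.derivative
      = 2 * r.derivative + (Polynomial.X - Polynomial.C (w k)) * r.derivative.derivative := by
    rw [hd1, Polynomial.derivative_add, Polynomial.derivative_mul]
    simp
    ring
  have he1 : p.derivative.eval (w k) = r.eval (w k) := by rw [hd1]; simp
  have he2 : p.derivative.derivative.eval (w k) = 2 * r.derivative.eval (w k) := by
    rw [hd2]; simp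
  have hrval : r.eval (w k) = c * ∏ j ∈ E, (w k - w j) := by
    simp [hr, Polynomial.eval_prod]
  have hprod_ne : ∀ j ∈ E, w k - w j ≠ 0 := by
    intro j hj
    refine sub_ne_zero.mpr (fun h => (Finset.ne_of_mem_erase hj) (hwinj h.symm))
  have hrne : r.eval (w k) ≠ 0 := by
    rw [hrval]
    exact mul_ne_zero hc (Finset.prod_ne_zero_iff.mpr hprod_ne)
  have hr'val : r.derivative.eval (w k)
      = r.eval (w k) * ∑ j ∈ E, (w k - w j)⁻¹ := by
    rw [hr, Polynomial.derivative_C_mul, Polynomial.eval_mul, Polynomial.eval_C,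
      OPAaux.deriv_prod_eval, hrval, Finset.mul_sum, Finset.mul_sum]
    apply Finset.sum_congr rfl
    intro j hj
    have h1 : ∏ l ∈ E.erase j, (w k - w l) = (∏ l ∈ E, (w k - w l)) * (w k - w j)⁻¹ := by
      rw [eq_mul_inv_iff_mul_eq₀ (hprod_ne j hj)]
      exact Finset.prod_erase_mul E _ hj
    rw [h1]
    ring
  rw [hp0, he1, he2, hr'val] at hev
  set S : ℂ := ∑ j ∈ E, (w k - w j)⁻¹ with hS
  have hkey : 2 * w k * (w k - 1) * S + (((a:ℂ) + 1 - (n:ℂ)) * w k + ((n:ℂ) + (a:ℂ))) = 0 := by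
    have hfac : r.eval (w k) * (2 * w k * (w k - 1) * S
        + (((a:ℂ) + 1 - (n:ℂ)) * w k + ((n:ℂ) + (a:ℂ)))) = 0 := by
      linear_combination hev
    exact (mul_eq_zero.mp hfac).resolve_left hrne
  have hwk : w k ≠ 0 := hw0 k
  have hwk1 : w k - 1 ≠ 0 := sub_ne_zero.mpr (hw1 k)
  have hgoal : (∑ j ∈ Finset.univ.erase k, 1 / (w k - w j)) = S := by
    rw [hS, hE]
    apply Finset.sum_congr rfl
    intro j _
    rw [one_div]
  rw [hgoal]
  field_simp
  ring_nf
  ring_nf at hkey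
  linear_combination hkey
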